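/- If D is a connected k-dominating set of a connected graph G, then rx_k(G) ≤ rx_k(G[D]) + k. -/

import Mathlib

open SimpleGraph

/-- An edge-coloring `c` is a `k`-rainbow coloring of `G` if every set of `k` vertices
is connected by a rainbow tree (here: a connected subgraph whose edges receive
pairwise distinct colors). -/
def IsKRainbowColoring {V : Type*} (G : SimpleGraph V) (k : ℕ) (c : Sym2 V → ℕ) : Prop :=
  ∀ S : Finset V, S.card = k →
    ∃ T : G.Subgraph, T.Connected ∧ ↑S ⊆ T.verts ∧ Set.InjOn c T.edgeSet

/-- The `k`-rainbow index: minimum number of colors in a `k`-rainbow coloring. -/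
noncomputable def rxk {V : Type*} (G : SimpleGraph V) (k : ℕ) : ℕ :=
  sInf {m | ∃ c : Sym2 V → ℕ, (∀ e ∈ G.edgeSet, c e < m) ∧ IsKRainbowColoring G k c}

lemma my_map_connected {V W : Type*} {G : SimpleGraph V} {G' : SimpleGraph W}
    (f : G →g G') {H : G.Subgraph} (h : H.Connected) : (H.map f).Connected := by
  have hg : ∃ g : H.coe →g (H.map f).coe, ∀ x : H.verts, (g x : W) = f x := by
    refine ⟨⟨fun x => ⟨f x, ⟨x, x.2, rfl⟩⟩, ?_⟩, fun x => rfl⟩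
    intro a b hab
    exact ⟨a, b, hab, rfl, rfl⟩
  obtain ⟨g, hgval⟩ := hg
  rw [Subgraph.connected_iff'] at h ⊢
  refine (h.map g ?_)
  rintro ⟨w, x, hx, rfl⟩
  exact ⟨⟨x, hx⟩, Subtype.ext (hgval ⟨x, hx⟩)⟩

lemma my_sup_pendant {V : Type*} {G : SimpleGraph V} {α : Type*} [DecidableEq α]
    (T0 : G.Subgraph) (hT0 : T0.Connected) (s : Finset α) (f : α → G.Subgraph)
    (hc : ∀ a ∈ s, (f a).Connected) (hi : ∀ a ∈ s, ((f a).verts ∩ T0.verts).Nonempty) :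
    (T0 ⊔ s.sup f).Connected := by
  induction s using Finset.induction_on with
  | empty => simpa using hT0
  | insert a t ha ih =>
    rw [Finset.sup_insert, ← sup_assoc, sup_comm T0 (f a), sup_assoc]
    have h1 := ih (fun b hb => hc b (Finset.mem_insert_of_mem hb))
      (fun b hb => hi b (Finset.mem_insert_of_mem hb))
    refine Subgraph.connected_sup (hc a (Finset.mem_insert_self a t)).preconnected h1.preconnected ?_
    obtain ⟨x, hx1, hx2⟩ := hi a (Finset.mem_insert_self a t)
    exact ⟨x, hx1, Or.inl hx2⟩

lemma my_sup_edge {V : Type*} {G : SimpleGraph V} {α : Type*}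
    (s : Finset α) (f : α → G.Subgraph) {e : Sym2 V} (he : e ∈ (s.sup f).edgeSet) :
    ∃ a ∈ s, e ∈ (f a).edgeSet := by
  classical
  induction s using Finset.induction_on with
  | empty => simp [Subgraph.edgeSet_bot] at he
  | insert a t ha ih =>
    rw [Finset.sup_insert, Subgraph.edgeSet_sup] at he
    rcases he with he | he
    · exact ⟨a, Finset.mem_insert_self a t, he⟩
    · obtain ⟨b, hb, hbe⟩ := ih he
      exact ⟨b, Finset.mem_insert_of_mem hb, hbe⟩

lemma my_set_nonempty {V : Type*} [Finite V] (G : SimpleGraph V) (hG : G.Connected) (k : ℕ) :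
    {m | ∃ c : Sym2 V → ℕ, (∀ e ∈ G.edgeSet, c e < m) ∧ IsKRainbowColoring G k c}.Nonempty := by
  obtain ⟨n, ⟨eq⟩⟩ := Finite.exists_equiv_fin (Sym2 V)
  refine ⟨n, fun e => (eq e).val, fun e _ => (eq e).isLt, fun S hS => ⟨⊤, ?_, by simp, ?_⟩⟩
  · rw [Subgraph.connected_iff']
    exact hG.map Subgraph.topIso.symm.toHom Subgraph.topIso.symm.toEquiv.surjective
  · exact Set.injOn_of_injective (fun a b hab => eq.injective (Fin.val_injective hab))

theorem stmt8 {V : Type*} [Fintype V] (G : SimpleGraph V) (hG : G.Connected)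
    (k : ℕ) (hk : 2 ≤ k) (D : Finset V)
    (hdom : ∀ v : V, v ∉ D → k ≤ ((↑D : Set V) ∩ G.neighborSet v).ncard)
    (hconn : (G.induce (↑D : Set V)).Connected) :
    rxk G k ≤ rxk (G.induce (↑D : Set V)) k + k := by
  classical
  set Ds : Set V := (↑D : Set V) with hDs
  have hne := my_set_nonempty (G.induce Ds) hconn k
  set M := rxk (G.induce Ds) k with hMdef
  have hM : ∃ c : Sym2 Ds → ℕ, (∀ e ∈ (G.induce Ds).edgeSet, c e < M) ∧
      IsKRainbowColoring (G.induce Ds) k c := Nat.sInf_mem hne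
  obtain ⟨c', hc'b, hc'r⟩ := hM
  -- choose k neighbors in D for each vertex outside D
  have hnb : ∀ v : V, ∃ f : Fin k → V, v ∉ D →
      Function.Injective f ∧ ∀ i, f i ∈ D ∧ G.Adj v (f i) := by
    intro v
    by_cases hv : v ∈ D
    · exact ⟨fun _ => v, fun h => (h hv).elim⟩
    · have h := hdom v hv
      have hfin : (Ds ∩ G.neighborSet v).Finite := Set.toFinite _
      rw [Set.ncard_eq_toFinset_card _ hfin] at h
      obtain ⟨t, hts, htc⟩ := Finset.exists_subset_card_eq h
      have eT : {x // x ∈ t} ≃ Fin k := Fintype.equivFinOfCardEq (by rw [Fintype.card_coe, htc])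
      refine ⟨fun i => (eT.symm i : V), fun _ => ⟨?_, ?_⟩⟩
      · intro a b hab
        exact eT.symm.injective (Subtype.ext hab)
      · intro i
        have hm := hts (eT.symm i).2
        rw [Set.Finite.mem_toFinset] at hm
        exact ⟨hm.1, hm.2⟩
  choose F hF using hnb
  -- the coloring
  let newc : V → V → ℕ := fun v u => if h : ∃ i : Fin k, F v i = u then M + (h.choose : ℕ) else 0
  let cc : V → V → ℕ := fun a b =>
    if ha : a ∈ D then
      (if hb : b ∈ D then c' s(⟨a, Finset.mem_coe.mpr ha⟩, ⟨b, Finset.mem_coe.mpr hb⟩)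
       else newc b a)
    else (if b ∈ D then newc a b else 0)
  have hccsymm : ∀ a b, cc a b = cc b a := by
    intro a b
    by_cases ha : a ∈ D <;> by_cases hb : b ∈ D <;> simp [cc, ha, hb, Sym2.eq_swap]
  let c : Sym2 V → ℕ := Sym2.lift ⟨cc, hccsymm⟩
  have hc_mk : ∀ a b : V, c s(a, b) = cc a b := fun a b => rfl
  -- computation of c on pairs inside D
  have hc_in : ∀ a b : Ds, c s(a.1, b.1) = c' s(a, b) := by
    rintro ⟨a, ha⟩ ⟨b, hb⟩
    have ha' : a ∈ D := ha
    have hb' : b ∈ D := hb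
    simp [hc_mk, cc, ha', hb']
  -- computation of c on pendant edges
  have hc_out : ∀ (v : V) (hv : v ∉ D) (i : Fin k), c s(v, F v i) = M + (i : ℕ) := by
    intro v hv i
    have h1 := (hF v hv).2 i
    have hex : ∃ j : Fin k, F v j = F v i := ⟨i, rfl⟩
    have hch : hex.choose = i := (hF v hv).1 hex.choose_spec
    rw [hc_mk]
    simp only [cc, dif_neg hv, if_pos h1.1, newc, dif_pos hex, hch]
  have hnewb : ∀ v u : V, newc v u < M + k := by
    intro v u
    by_cases h : ∃ i : Fin k, F v i = u
    · have := h.choose.isLt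
      simp only [newc, dif_pos h]; omega
    · simp only [newc, dif_neg h]; omega
  -- the bound
  have hcb : ∀ e ∈ G.edgeSet, c e < M + k := by
    intro e
    induction e using Sym2.ind with
    | _ a b =>
      intro he
      have hab : G.Adj a b := he
      rw [hc_mk]
      by_cases ha : a ∈ D <;> by_cases hb : b ∈ D
      · have hlt := hc'b s(⟨a, Finset.mem_coe.mpr ha⟩, ⟨b, Finset.mem_coe.mpr hb⟩)
          ((G.induce Ds).mem_edgeSet.mpr (by simpa using hab))
        simp only [cc, dif_pos ha, dif_pos hb]
        omega
      · simp only [cc, dif_pos ha, dif_neg hb]; exact hnewb b a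
      · simp only [cc, dif_neg ha, if_pos hb]; exact hnewb a b
      · simp only [cc, dif_neg ha, if_neg hb]; omega
  -- conclude via membership
  apply Nat.sInf_le
  refine ⟨c, hcb, ?_⟩
  intro S hS

  -- D has at least k elements
  have hDcard : k ≤ D.card := by
    by_cases hSD : ∀ v ∈ S, v ∈ D
    · calc k = S.card := hS.symm
        _ ≤ D.card := Finset.card_le_card (fun v hv => hSD v hv)
    · push_neg at hSD
      obtain ⟨v, hvS, hvD⟩ := hSD
      have h1 : k ≤ (Ds ∩ G.neighborSet v).ncard := hdom v hvD
      have h2 : (Ds ∩ G.neighborSet v).ncard ≤ D.card := by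
        rw [← Set.ncard_coe_finset D]
        exact Set.ncard_le_ncard Set.inter_subset_left (Set.toFinite _)
      omega
  set Sout : Finset V := S \ D with hSoutdef
  have hrk : Sout.card ≤ k := by
    rw [← hS]
    exact Finset.card_le_card Finset.sdiff_subset
  have eS : {x // x ∈ Sout} ≃ Fin Sout.card :=
    Fintype.equivFinOfCardEq (Fintype.card_coe Sout)
  let φ : {x // x ∈ Sout} → Fin k := fun x => Fin.castLE hrk (eS x)
  have hφinj : Function.Injective φ := fun a b hab =>
    eS.injective (Fin.castLE_injective hrk hab)
  have hxout : ∀ x : {x // x ∈ Sout}, x.1 ∉ D := fun x => (Finset.mem_sdiff.mp x.2).2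
  let u : {x // x ∈ Sout} → V := fun x => F x.1 (φ x)
  have hu : ∀ x, u x ∈ D ∧ G.Adj x.1 (u x) := fun x => (hF x.1 (hxout x)).2 (φ x)
  -- build the base vertex set in D
  let Bs : Finset V := (S ∩ D) ∪ Sout.attach.image u
  have hBsub : Bs ⊆ D := by
    intro b hb
    rcases Finset.mem_union.mp hb with h | h
    · exact (Finset.mem_inter.mp h).2
    · obtain ⟨x, _, rfl⟩ := Finset.mem_image.mp h
      exact (hu x).1
  have hBcard : Bs.card ≤ k := by
    calc Bs.card ≤ (S ∩ D).card + (Sout.attach.image u).card := Finset.card_union_le _ _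
      _ ≤ (S ∩ D).card + Sout.attach.card := by
          gcongr
          exact Finset.card_image_le
      _ = (S ∩ D).card + Sout.card := by rw [Finset.card_attach]
      _ = S.card := by rw [hSoutdef, Finset.card_inter_add_card_sdiff]
      _ = k := hS
  obtain ⟨B', hBB', hB'D, hB'card⟩ := Finset.exists_subsuperset_card_eq hBsub hBcard hDcard
  let S' : Finset Ds := B'.attach.map
    ⟨fun x => ⟨x.1, Finset.mem_coe.mpr (hB'D x.2)⟩,
     fun a b hab => Subtype.ext (by simpa using congrArg Subtype.val hab)⟩
  have hS'card : S'.card = k := by rw [Finset.card_map, Finset.card_attach, hB'card]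
  obtain ⟨T', hT'conn, hT'sub, hT'inj⟩ := hc'r S' hS'card
  have hmemT' : ∀ (w : V) (hw : w ∈ B'),
      (⟨w, Finset.mem_coe.mpr (hB'D hw)⟩ : Ds) ∈ T'.verts := by
    intro w hw
    apply hT'sub
    rw [Finset.mem_coe, Finset.mem_map]
    exact ⟨⟨w, hw⟩, Finset.mem_attach _ _, rfl⟩
  -- build the subgraph of G
  let T0 : G.Subgraph := T'.map (SimpleGraph.Embedding.induce Ds).toHom
  have hT0conn : T0.Connected := my_map_connected _ hT'conn
  have hT0verts : T0.verts = Subtype.val '' T'.verts := rfl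
  have huT0 : ∀ x, u x ∈ T0.verts := by
    intro x
    have hm : u x ∈ B' := hBB' (Finset.mem_union_right _
      (Finset.mem_image.mpr ⟨x, Finset.mem_attach _ _, rfl⟩))
    exact ⟨⟨u x, Finset.mem_coe.mpr (hB'D hm)⟩, hmemT' (u x) hm, rfl⟩
  let fp : {x // x ∈ Sout} → G.Subgraph := fun x => G.subgraphOfAdj (hu x).2
  let T : G.Subgraph := T0 ⊔ Sout.attach.sup fp
  have hTconn : T.Connected := by
    refine my_sup_pendant T0 hT0conn _ fp (fun a _ => SimpleGraph.Subgraph.subgraphOfAdj_connected (hu a).2) ?_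
    intro a _
    exact ⟨u a, by simp [fp], huT0 a⟩
  have hSsub : ↑S ⊆ T.verts := by
    intro v hv
    rw [Finset.mem_coe] at hv
    by_cases hvD : v ∈ D
    · left
      have hm : v ∈ B' := hBB' (Finset.mem_union_left _ (Finset.mem_inter.mpr ⟨hv, hvD⟩))
      exact ⟨⟨v, Finset.mem_coe.mpr (hB'D hm)⟩, hmemT' v hm, rfl⟩
    · right
      have hvS : v ∈ Sout := Finset.mem_sdiff.mpr ⟨hv, hvD⟩
      have hle : fp ⟨v, hvS⟩ ≤ Sout.attach.sup fp := Finset.le_sup (Finset.mem_attach _ _)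
      apply Subgraph.verts_mono hle
      simp [fp]
  -- edge decomposition facts
  have hT0edge : ∀ e ∈ T0.edgeSet, ∃ e' ∈ T'.edgeSet, e = Sym2.map Subtype.val e' := by
    intro e
    induction e using Sym2.ind with
    | _ a b =>
      intro he
      rw [Subgraph.mem_edgeSet, Subgraph.map_adj] at he
      obtain ⟨x, y, hxy, hx, hy⟩ := he
      exact ⟨s(x, y), Subgraph.mem_edgeSet.mpr hxy, by subst hx hy; rfl⟩
  have hcceq : ∀ e' : Sym2 Ds, c (Sym2.map Subtype.val e') = c' e' := by
    intro e'
    induction e' using Sym2.ind with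
    | _ a b => rw [Sym2.map_pair_eq]; exact hc_in a b
  have hlt' : ∀ e' ∈ T'.edgeSet, c' e' < M :=
    fun e' h => hc'b e' (T'.edgeSet_subset h)
  have hpend : ∀ x, (fp x).edgeSet = {s(x.1, u x)} := fun x => G.edgeSet_subgraphOfAdj _
  have hpendc : ∀ x, c s(x.1, u x) = M + (φ x : ℕ) := fun x => hc_out x.1 (hxout x) (φ x)
  refine ⟨T, hTconn, hSsub, ?_⟩
  intro e1 he1 e2 he2 hce
  rw [Subgraph.edgeSet_sup] at he1 he2
  rcases he1 with he1 | he1 <;> rcases he2 with he2 | he2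
  · obtain ⟨e1', he1', rfl⟩ := hT0edge e1 he1
    obtain ⟨e2', he2', rfl⟩ := hT0edge e2 he2
    rw [hcceq e1', hcceq e2'] at hce
    rw [hT'inj he1' he2' hce]
  · obtain ⟨e1', he1', rfl⟩ := hT0edge e1 he1
    obtain ⟨x, _, hx⟩ := my_sup_edge _ _ he2
    rw [hpend x, Set.mem_singleton_iff] at hx
    rw [hcceq e1'] at hce
    have h1 := hlt' e1' he1'
    rw [hx, hpendc x] at hce
    omega
  · obtain ⟨e2', he2', rfl⟩ := hT0edge e2 he2
    obtain ⟨x, _, hx⟩ := my_sup_edge _ _ he1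
    rw [hpend x, Set.mem_singleton_iff] at hx
    rw [hcceq e2'] at hce
    have h1 := hlt' e2' he2'
    rw [hx, hpendc x] at hce
    omega
  · obtain ⟨x, _, hx⟩ := my_sup_edge _ _ he1
    obtain ⟨y, _, hy⟩ := my_sup_edge _ _ he2
    rw [hpend x, Set.mem_singleton_iff] at hx
    rw [hpend y, Set.mem_singleton_iff] at hy
    rw [hx, hy, hpendc x, hpendc y] at hce
    have hxy : x = y := hφinj (Fin.val_injective (by omega))
    rw [hx, hy, hxy]
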